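/- Let n ≥ 2, J > 0 and H ∈ ℝ, and let P̃ be the (n+1)×(n+1) magnetization chain matrix of the mean-field Glauber dynamics. Let λ₂ be the second-largest eigenvalue of the full Glauber chain (which is also an eigenvalue of P̃). If f = (f_0,…,f_n) and g = (g_0,…,g_n) are both increasing eigenvectors of P̃ with eigenvalue λ₂ (i.e., P̃f = λ₂f, P̃g = λ₂g, f_k ≤ f_{k+1} and g_k ≤ g_{k+1} for all k, and neither f nor g is constant), then there exists a scalar r ∈ ℝ such that f = r·g. In other words, the increasing eigenvector of λ₂ is unique up to multiplication by a scalar. -/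

import Mathlib

/-- The spin value of a site: `+1` for `true`, `-1` for `false`. -/
def spin (b : Bool) : ℝ := if b then 1 else -1

/-- The rate at which the Glauber dynamics for the mean-field Ising model on the
complete graph with `n` vertices, coupling `J` and uniform external field `H`
flips the spin at vertex `x` of the configuration `σ`:
`(1/n) · 1/(1 + exp(−2 σ'_x (J Σ_{y≠x} σ_y + H)))` where `σ'_x = −σ_x`. -/
noncomputable def flipRate (n : ℕ) (J H : ℝ) (σ : Fin n → Bool) (x : Fin n) : ℝ :=
  (1 / (n : ℝ)) *
    (1 + Real.exp (-2 * spin (!σ x) *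
      (J * ∑ y ∈ Finset.univ.erase x, spin (σ y) + H)))⁻¹

/-- The transition matrix of the Glauber dynamics for the mean-field Ising model on
the complete graph with `n` vertices, coupling `J` and uniform external field `H`.
Transitions change at most one coordinate. -/
noncomputable def glauberP (n : ℕ) (J H : ℝ) : Matrix (Fin n → Bool) (Fin n → Bool) ℝ :=
  fun σ σ' =>
    if σ' = σ then 1 - ∑ x : Fin n, flipRate n J H σ x
    else ∑ x : Fin n, if σ' = Function.update σ x (!σ x) then flipRate n J H σ x else 0

/-- `μ` is a (real) eigenvalue of the matrix `M`. -/
def IsEigenvalue {m : Type*} [Fintype m] (M : Matrix m m ℝ) (μ : ℝ) : Prop :=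
  ∃ v : m → ℝ, v ≠ 0 ∧ M.mulVec v = μ • v

/-- `μ` is the second-largest eigenvalue of the transition matrix `M` whose
eigenvalues are real and satisfy `1 = λ₁ > λ₂ ≥ … ≥ λ_N`: it is the largest
eigenvalue different from `1`. -/
def IsSecondEigenvalue {m : Type*} [Fintype m] (M : Matrix m m ℝ) (μ : ℝ) : Prop :=
  IsEigenvalue M μ ∧ μ ≠ 1 ∧ ∀ μ' : ℝ, IsEigenvalue M μ' → μ' ≠ 1 → μ' ≤ μ


/-- Upward transition rate of the magnetization chain:
`P̃_{k,k+1} = ((n−k)/n) · 1/(1 + exp((n−2k−1)·2J − 2H))`. -/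
noncomputable def pUp (n : ℕ) (J H : ℝ) (k : ℕ) : ℝ :=
  (((n : ℝ) - k) / n) * (1 + Real.exp (((n : ℝ) - 2 * k - 1) * (2 * J) - 2 * H))⁻¹

/-- Downward transition rate of the magnetization chain:
`P̃_{k,k−1} = (k/n) · 1/(1 + exp(−(n−2k+1)·2J + 2H))`. -/
noncomputable def pDown (n : ℕ) (J H : ℝ) (k : ℕ) : ℝ :=
  ((k : ℝ) / n) * (1 + Real.exp (-((n : ℝ) - 2 * k + 1) * (2 * J) + 2 * H))⁻¹

/-- The `(n+1)×(n+1)` tridiagonal transition matrix of the magnetization chain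
associated to the mean-field Glauber dynamics.  (Note `pDown n J H 0 = 0` and
`pUp n J H n = 0`, implementing the conventions `P̃_{0,−1} = P̃_{n,n+1} = 0`.) -/
noncomputable def magP (n : ℕ) (J H : ℝ) : Matrix (Fin (n + 1)) (Fin (n + 1)) ℝ :=
  fun k l =>
    if (l : ℕ) = (k : ℕ) + 1 then pUp n J H k
    else if (k : ℕ) = (l : ℕ) + 1 then pDown n J H k
    else if k = l then 1 - pDown n J H k - pUp n J H k
    else 0


/-- An eigenvector of `magP` whose first entry vanishes is zero. -/
lemma magP_eig_zero (n : ℕ) (hn : 0 < n) (J H lam : ℝ)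
    (v : Fin (n + 1) → ℝ) (hv : (magP n J H).mulVec v = lam • v)
    (h0 : v 0 = 0) : v = 0 := by
  have key : ∀ m : ℕ, ∀ h : m < n + 1, v ⟨m, h⟩ = 0 := by
    intro m
    induction m using Nat.strong_induction_on with
    | _ m ih =>
      intro h
      match m, h with
      | 0, h => exact h0
      | m + 1, h =>
        have hm : m < n + 1 := by omega
        have hvm : v ⟨m, hm⟩ = 0 := ih m (by omega) hm
        have row := congrFun hv ⟨m, hm⟩
        rw [Matrix.mulVec, dotProduct] at row
        have hsum : ∑ l, magP n J H ⟨m, hm⟩ l * v l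
            = magP n J H ⟨m, hm⟩ ⟨m + 1, h⟩ * v ⟨m + 1, h⟩ := by
          refine Finset.sum_eq_single_of_mem _ (Finset.mem_univ _) (fun l _ hl => ?_)
          simp only [magP]
          split_ifs with h1 h2 h3
          · exact absurd (Fin.ext h1) hl
          · have : (l : ℕ) < m + 1 := by omega
            rw [show l = ⟨(l : ℕ), l.isLt⟩ from rfl, ih (l : ℕ) this l.isLt, mul_zero]
          · have : (l : ℕ) = m := by
              have := congrArg Fin.val h3; simpa using this.symm
            rw [show l = ⟨(l : ℕ), l.isLt⟩ from rfl, ih (l : ℕ) (by omega) l.isLt, mul_zero]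
          · exact zero_mul _
        have hentry : magP n J H ⟨m, hm⟩ ⟨m + 1, h⟩ = pUp n J H m := by
          simp [magP]
        have hpos : 0 < pUp n J H m := by
          unfold pUp
          apply mul_pos
          · apply div_pos
            · have hmn : (m : ℝ) < n := by exact_mod_cast (by omega : m < n)
              linarith
            · exact_mod_cast hn
          · have : (0 : ℝ) < 1 + Real.exp (((n : ℝ) - 2 * m - 1) * (2 * J) - 2 * H) := by
              positivity
            exact inv_pos.mpr this
        rw [hsum, hentry] at row
        simp only [Pi.smul_apply, smul_eq_mul, hvm, mul_zero] at row
        exact (mul_eq_zero.mp row).resolve_left (ne_of_gt hpos)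
  funext k
  exact key k.val k.isLt

/-- The increasing eigenvector of the magnetization chain `P̃` for the second-largest
eigenvalue `λ₂` of the full Glauber chain is unique up to multiplication by a scalar. -/
theorem magP_increasing_eigenvector_unique
    (n : ℕ) (hn : 2 ≤ n) (J H : ℝ) (hJ : 0 < J) (lam : ℝ)
    (hlam : IsSecondEigenvalue (glauberP n J H) lam)
    (f g : Fin (n + 1) → ℝ)
    (hf : (magP n J H).mulVec f = lam • f)
    (hg : (magP n J H).mulVec g = lam • g)
    (hfinc : ∀ k : Fin n, f k.castSucc ≤ f k.succ)
    (hginc : ∀ k : Fin n, g k.castSucc ≤ g k.succ)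
    (hfnc : ¬ ∀ k l : Fin (n + 1), f k = f l)
    (hgnc : ¬ ∀ k l : Fin (n + 1), g k = g l) :
    ∃ r : ℝ, f = r • g := by
  have hn0 : 0 < n := by omega
  have hg0 : g 0 ≠ 0 := by
    intro h
    have hz := magP_eig_zero n hn0 J H lam g hg h
    exact hgnc (fun k l => by simp [hz])
  refine ⟨f 0 / g 0, ?_⟩
  set r := f 0 / g 0 with hr
  have hw : (magP n J H).mulVec (f - r • g) = lam • (f - r • g) := by
    rw [Matrix.mulVec_sub, Matrix.mulVec_smul, hf, hg, smul_sub, smul_comm]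
  have hw0 : (f - r • g) 0 = 0 := by
    simp only [Pi.sub_apply, Pi.smul_apply, smul_eq_mul, hr]
    field_simp
    ring
  have hz := magP_eig_zero n hn0 J H lam _ hw hw0
  have := sub_eq_zero.mp hz
  exact this
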